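/- Assume λ₂ = 0. Then xQ_n(x) = P_{n+1}(x) + b_n P_{n-1}(x) for n ≥ 1, where b_n = k̂_n / k_{n-1}, with k_n = ⟨P_n,P_n⟩_F and k̂_n = ⟨Q_n,Q_n⟩_S. -/

import Mathlib

open Polynomial MeasureTheory Filter Topology

/-- The Freud inner product `⟨f,g⟩_F = ∫_ℝ f(x) g(x) e^{-x⁴} dx`. -/
noncomputable def innerF (f g : Polynomial ℝ) : ℝ :=
  ∫ x : ℝ, f.eval x * g.eval x * Real.exp (-x ^ 4)


/-- The Sobolev inner product
`⟨f,g⟩_S = ⟨f,g⟩_F + λ₁ f(0) g(0) + λ₂ f'(0) g'(0)`. -/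
noncomputable def innerS (l1 l2 : ℝ) (f g : Polynomial ℝ) : ℝ :=
  innerF f g + l1 * f.eval 0 * g.eval 0
    + l2 * (Polynomial.derivative f).eval 0 * (Polynomial.derivative g).eval 0


lemma aux_abs_pow_le (x : ℝ) (m : ℕ) :
    |x| ^ m ≤ (m.factorial : ℝ) * Real.exp |x| := by
  have h := Real.sum_le_exp_of_nonneg (abs_nonneg x) (m + 1)
  have h2 : |x| ^ m / (m.factorial : ℝ) ≤ Real.exp |x| := by
    refine le_trans ?_ h
    exact Finset.single_le_sum (f := fun i => |x| ^ i / (i.factorial : ℝ))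
      (fun i _ => by positivity) (Finset.self_mem_range_succ m)
  have hm : (0:ℝ) < (m.factorial : ℝ) := by positivity
  rw [div_le_iff₀ hm] at h2
  linarith [h2]

lemma aux_exp_le (x : ℝ) : Real.exp |x| * Real.exp (-x ^ 4) ≤ Real.exp 6 * Real.exp (-x ^ 2) := by
  rw [← Real.exp_add, ← Real.exp_add]
  apply Real.exp_le_exp.2
  have h2 : |x| ^ 2 = x ^ 2 := sq_abs x
  have h4 : |x| ^ 4 = x ^ 4 := by
    rw [← abs_pow]; exact abs_of_nonneg (by positivity)
  nlinarith [abs_nonneg x, sq_nonneg (|x| ^ 2 - 2), sq_nonneg (|x| - 1), sq_nonneg (|x| + 1)]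

lemma integrable_poly_exp (p : Polynomial ℝ) :
    Integrable (fun x : ℝ => p.eval x * Real.exp (-x ^ 4)) := by
  induction p using Polynomial.induction_on' with
  | add p q hp hq => simp only [Polynomial.eval_add, add_mul]; exact hp.add hq
  | monomial m a =>
    have hint : Integrable (fun x : ℝ => Real.exp (-x ^ 2)) := by
      simpa using integrable_exp_neg_mul_sq (one_pos (α := ℝ))
    refine ((hint.const_mul (|a| * (m.factorial : ℝ) * Real.exp 6)).mono' ?_ ?_)
    · exact (((Polynomial.continuous _).mul
        (Real.continuous_exp.comp (by continuity))).aestronglyMeasurable)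
    · filter_upwards with x
      have hx : ‖(Polynomial.monomial m a).eval x * Real.exp (-x ^ 4)‖
          = |a| * (|x| ^ m * Real.exp (-x ^ 4)) := by
        rw [Polynomial.eval_monomial, Real.norm_eq_abs, abs_mul, abs_mul, abs_pow,
          abs_of_pos (Real.exp_pos _), mul_assoc]
      rw [hx]
      have h1 : |x| ^ m * Real.exp (-x ^ 4)
          ≤ ((m.factorial : ℝ) * Real.exp |x|) * Real.exp (-x ^ 4) := by
        gcongr
        exact aux_abs_pow_le x m
      have h2 : ((m.factorial : ℝ) * Real.exp |x|) * Real.exp (-x ^ 4)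
          ≤ (m.factorial : ℝ) * (Real.exp 6 * Real.exp (-x ^ 2)) := by
        rw [mul_assoc]
        exact mul_le_mul_of_nonneg_left (aux_exp_le x) (by positivity)
      calc |a| * (|x| ^ m * Real.exp (-x ^ 4))
          ≤ |a| * ((m.factorial : ℝ) * (Real.exp 6 * Real.exp (-x ^ 2))) := by
            exact mul_le_mul_of_nonneg_left (le_trans h1 h2) (abs_nonneg a)
        _ = |a| * (m.factorial : ℝ) * Real.exp 6 * Real.exp (-x ^ 2) := by ring

lemma integrableF (f g : Polynomial ℝ) :
    Integrable (fun x : ℝ => f.eval x * g.eval x * Real.exp (-x ^ 4)) := by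
  simpa [Polynomial.eval_mul] using integrable_poly_exp (f * g)

lemma innerF_comm (f g : Polynomial ℝ) : innerF f g = innerF g f := by
  unfold innerF; congr 1; funext x; ring

lemma innerF_add_right (f g h : Polynomial ℝ) :
    innerF f (g + h) = innerF f g + innerF f h := by
  unfold innerF
  rw [← integral_add (integrableF f g) (integrableF f h)]
  congr 1; funext x; simp [Polynomial.eval_add]; ring

lemma innerF_sub_right (f g h : Polynomial ℝ) :
    innerF f (g - h) = innerF f g - innerF f h := by
  unfold innerF
  rw [← integral_sub (integrableF f g) (integrableF f h)]
  congr 1; funext x; simp [Polynomial.eval_sub]; ring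

lemma innerF_C_mul_right (a : ℝ) (f g : Polynomial ℝ) :
    innerF f (C a * g) = a * innerF f g := by
  unfold innerF
  rw [← integral_const_mul]
  congr 1; funext x; simp [Polynomial.eval_mul]; ring

lemma innerF_zero_right (f : Polynomial ℝ) : innerF f 0 = 0 := by
  unfold innerF; simp

lemma innerF_sub_left (f g h : Polynomial ℝ) :
    innerF (f - g) h = innerF f h - innerF g h := by
  rw [innerF_comm, innerF_sub_right, innerF_comm h f, innerF_comm h g]

lemma innerF_X_shift (f g : Polynomial ℝ) : innerF f (X * g) = innerF (X * f) g := by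
  unfold innerF; congr 1; funext x; simp [Polynomial.eval_mul]; ring

lemma innerF_self_pos (p : Polynomial ℝ) (hp : p ≠ 0) : 0 < innerF p p := by
  unfold innerF
  have hnn : ∀ x : ℝ, 0 ≤ p.eval x * p.eval x * Real.exp (-x ^ 4) := by
    intro x
    have := Real.exp_pos (-x ^ 4)
    nlinarith [sq_nonneg (p.eval x)]
  rw [integral_pos_iff_support_of_nonneg hnn (integrableF p p)]
  obtain ⟨x₀, hx₀⟩ : ∃ x : ℝ, p.eval x ≠ 0 := by
    by_contra hcon
    push_neg at hcon
    exact hp (Polynomial.funext fun x => by simp [hcon x])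
  have hsub : {x : ℝ | p.eval x ≠ 0} ⊆ Function.support
      (fun x => p.eval x * p.eval x * Real.exp (-x ^ 4)) := by
    intro x hx
    have := Real.exp_pos (-x ^ 4)
    simp only [Function.mem_support]
    intro hzero
    apply hx
    rcases mul_eq_zero.mp hzero with h | h
    · exact mul_self_eq_zero.mp h
    · exact absurd h (Real.exp_ne_zero _)
  have hopen : IsOpen {x : ℝ | p.eval x ≠ 0} :=
    isOpen_ne.preimage (Polynomial.continuous p)
  have hpos : 0 < volume {x : ℝ | p.eval x ≠ 0} :=
    hopen.measure_pos volume ⟨x₀, hx₀⟩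
  exact lt_of_lt_of_le hpos (measure_mono hsub)

noncomputable def innerS' (l1 l2 : ℝ) (f g : Polynomial ℝ) : ℝ :=
  innerF f g + l1 * f.eval 0 * g.eval 0
    + l2 * (Polynomial.derivative f).eval 0 * (Polynomial.derivative g).eval 0

lemma innerS'_def (l1 : ℝ) (f g : Polynomial ℝ) :
    innerS' l1 0 f g = innerF f g + l1 * f.eval 0 * g.eval 0 := by
  simp [innerS']

lemma innerS'_comm (l1 : ℝ) (f g : Polynomial ℝ) :
    innerS' l1 0 f g = innerS' l1 0 g f := by
  rw [innerS'_def, innerS'_def, innerF_comm]; ring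

lemma innerS'_add_right (l1 : ℝ) (f g h : Polynomial ℝ) :
    innerS' l1 0 f (g + h) = innerS' l1 0 f g + innerS' l1 0 f h := by
  simp only [innerS'_def, innerF_add_right, Polynomial.eval_add]; ring

lemma innerS'_sub_right (l1 : ℝ) (f g h : Polynomial ℝ) :
    innerS' l1 0 f (g - h) = innerS' l1 0 f g - innerS' l1 0 f h := by
  simp only [innerS'_def, innerF_sub_right, Polynomial.eval_sub]; ring

lemma innerS'_C_mul_right (l1 a : ℝ) (f g : Polynomial ℝ) :
    innerS' l1 0 f (C a * g) = a * innerS' l1 0 f g := by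
  simp only [innerS'_def, innerF_C_mul_right, Polynomial.eval_mul, Polynomial.eval_C]; ring

lemma innerS'_self_pos (l1 : ℝ) (hl1 : 0 ≤ l1) (p : Polynomial ℝ) (hp : p ≠ 0) :
    0 < innerS' l1 0 p p := by
  rw [innerS'_def]
  have h1 := innerF_self_pos p hp
  nlinarith [sq_nonneg (p.eval 0), mul_nonneg hl1 (sq_nonneg (p.eval 0))]

/-- Generic extension of orthogonality from monomials to low-degree polynomials. -/
lemma orth_ext (φ : Polynomial ℝ → ℝ)
    (hadd : ∀ g h, φ (g + h) = φ g + φ h)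
    (hC : ∀ a g, φ (C a * g) = a * φ g)
    (n : ℕ) (hm : ∀ m, m < n → φ (X ^ m) = 0)
    (g : Polynomial ℝ) (hg : g.degree < (n : ℕ)) : φ g = 0 := by
  have hzero : φ 0 = 0 := by
    have := hC 0 0; simpa using this
  by_cases hg0 : g = 0
  · rw [hg0]; exact hzero
  have hdeg : g.natDegree < n := (Polynomial.natDegree_lt_iff_degree_lt hg0).mpr hg
  have hsum : ∀ s : Finset ℕ, φ (∑ m ∈ s, Polynomial.monomial m (g.coeff m))
      = ∑ m ∈ s, g.coeff m * φ (X ^ m) := by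
    intro s
    induction s using Finset.induction with
    | empty => simpa using hzero
    | insert a s hnotmem ih =>
      rw [Finset.sum_insert hnotmem, Finset.sum_insert hnotmem, hadd, ih,
        ← Polynomial.C_mul_X_pow_eq_monomial, hC]
  conv_lhs => rw [g.as_sum_range' n hdeg]
  rw [hsum]
  apply Finset.sum_eq_zero
  intro m hmem
  rw [hm m (Finset.mem_range.mp hmem), mul_zero]

/-- Uniqueness of monic polynomials orthogonal to lower monomials. -/
lemma unique_orth (φ : Polynomial ℝ → Polynomial ℝ → ℝ)
    (hsub : ∀ f g h, φ (f - g) h = φ f h - φ g h)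
    (haddr : ∀ f g h, φ f (g + h) = φ f g + φ f h)
    (hCr : ∀ a f g, φ f (C a * g) = a * φ f g)
    (hpos : ∀ r, r ≠ 0 → φ r r ≠ 0)
    (n : ℕ) (p q : Polynomial ℝ) (hp : p.Monic) (hpd : p.natDegree = n)
    (hq : q.Monic) (hqd : q.natDegree = n)
    (hpo : ∀ m, m < n → φ p (X ^ m) = 0) (hqo : ∀ m, m < n → φ q (X ^ m) = 0) :
    p = q := by
  by_contra hne
  have hD : p - q ≠ 0 := sub_ne_zero.mpr hne
  have hdeg : (p - q).degree < (n : ℕ) := by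
    have h1 : p.degree = q.degree := by
      rw [Polynomial.degree_eq_natDegree hp.ne_zero, Polynomial.degree_eq_natDegree hq.ne_zero,
        hpd, hqd]
    have h2 := Polynomial.degree_sub_lt h1 hp.ne_zero (by rw [hp.leadingCoeff, hq.leadingCoeff])
    rw [Polynomial.degree_eq_natDegree hp.ne_zero, hpd] at h2
    exact h2
  have hzero : φ (p - q) (p - q) = 0 := by
    refine orth_ext (φ (p - q)) (haddr _) (fun a g => hCr a _ g) n ?_ _ hdeg
    intro m hm
    rw [hsub, hpo m hm, hqo m hm, sub_zero]
  exact hpos _ hD hzero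

noncomputable def pflip (n : ℕ) (p : Polynomial ℝ) : Polynomial ℝ :=
  C ((-1 : ℝ) ^ n) * p.comp (-X)

lemma pflip_eval (n : ℕ) (p : Polynomial ℝ) (x : ℝ) :
    (pflip n p).eval x = (-1 : ℝ) ^ n * p.eval (-x) := by
  simp [pflip, Polynomial.eval_comp]

lemma neg_one_pow_sq (n : ℕ) : ((-1 : ℝ) ^ n) * ((-1 : ℝ) ^ n) = 1 := by
  rw [← pow_add]
  exact Even.neg_one_pow ⟨n, rfl⟩

lemma pflip_natDegree (n : ℕ) (p : Polynomial ℝ) : (pflip n p).natDegree = p.natDegree := by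
  rw [pflip, Polynomial.natDegree_C_mul (by positivity : ((-1:ℝ)^n) ≠ 0),
    Polynomial.natDegree_comp]
  simp

lemma pflip_monic (n : ℕ) (p : Polynomial ℝ) (hp : p.Monic) (hd : p.natDegree = n) :
    (pflip n p).Monic := by
  unfold Polynomial.Monic
  rw [pflip, Polynomial.leadingCoeff_mul, Polynomial.leadingCoeff_C,
    Polynomial.leadingCoeff_comp (by simp : (-X : Polynomial ℝ).natDegree ≠ 0)]
  rw [hp.leadingCoeff, Polynomial.leadingCoeff_neg, Polynomial.leadingCoeff_X, hd]
  rw [one_mul]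
  exact neg_one_pow_sq n

lemma innerF_pflip (n m : ℕ) (p : Polynomial ℝ) :
    innerF (pflip n p) (X ^ m) = (-1 : ℝ) ^ (n + m) * innerF p (X ^ m) := by
  unfold innerF
  rw [← integral_neg_eq_self, ← integral_const_mul]
  congr 1; funext x
  rw [pflip_eval]
  simp only [Polynomial.eval_pow, Polynomial.eval_X, neg_neg]
  rw [show (-x : ℝ) ^ 4 = x ^ 4 from by ring, pow_add, neg_pow x m]
  ring

lemma innerS'_sub_left (l1 : ℝ) (f g h : Polynomial ℝ) :
    innerS' l1 0 (f - g) h = innerS' l1 0 f h - innerS' l1 0 g h := by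
  rw [innerS'_comm, innerS'_sub_right, innerS'_comm l1 h f, innerS'_comm l1 h g]

lemma P_parity (P : ℕ → Polynomial ℝ)
    (hPmonic : ∀ n, (P n).Monic) (hPdeg : ∀ n, (P n).natDegree = n)
    (hPorth : ∀ n m : ℕ, m < n → innerF (P n) (X ^ m) = 0)
    (n : ℕ) (x : ℝ) : (P n).eval (-x) = (-1 : ℝ) ^ n * (P n).eval x := by
  have heq : P n = pflip n (P n) := by
    refine unique_orth innerF innerF_sub_left innerF_add_right innerF_C_mul_right
      (fun r hr => (innerF_self_pos r hr).ne') n (P n) (pflip n (P n))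
      (hPmonic n) (hPdeg n) (pflip_monic n (P n) (hPmonic n) (hPdeg n))
      (by rw [pflip_natDegree]; exact hPdeg n) (hPorth n) ?_
    intro m hm
    rw [innerF_pflip, hPorth n m hm, mul_zero]
  have hx := congrArg (Polynomial.eval x) heq
  rw [pflip_eval] at hx
  rw [hx]
  linear_combination (-(P n).eval (-x)) * neg_one_pow_sq n

lemma Q_parity (l1 : ℝ) (hl1 : 0 ≤ l1) (Q : ℕ → Polynomial ℝ)
    (hQmonic : ∀ n, (Q n).Monic) (hQdeg : ∀ n, (Q n).natDegree = n)
    (hQorth : ∀ n m : ℕ, m < n → innerS' l1 0 (Q n) (X ^ m) = 0)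
    (n : ℕ) (x : ℝ) : (Q n).eval (-x) = (-1 : ℝ) ^ n * (Q n).eval x := by
  have heq : Q n = pflip n (Q n) := by
    refine unique_orth (innerS' l1 0) (innerS'_sub_left l1) (innerS'_add_right l1)
      (innerS'_C_mul_right l1)
      (fun r hr => (innerS'_self_pos l1 hl1 r hr).ne') n (Q n) (pflip n (Q n))
      (hQmonic n) (hQdeg n) (pflip_monic n (Q n) (hQmonic n) (hQdeg n))
      (by rw [pflip_natDegree]; exact hQdeg n) (hQorth n) ?_
    intro m hm
    have hq := hQorth n m hm
    rw [innerS'_def] at hq ⊢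
    rw [innerF_pflip]
    have he : (pflip n (Q n)).eval 0 = (-1 : ℝ) ^ n * (Q n).eval 0 := by
      rw [pflip_eval, neg_zero]
    rw [he]
    cases m with
    | zero =>
      simp only [pow_zero, Polynomial.eval_one, mul_one, Nat.add_zero] at hq ⊢
      linear_combination ((-1 : ℝ) ^ n) * hq
    | succ j =>
      have h0 : (X ^ (j + 1) : Polynomial ℝ).eval 0 = 0 := by simp
      rw [h0] at hq ⊢
      linear_combination ((-1 : ℝ) ^ (n + (j + 1))) * hq
  have hx := congrArg (Polynomial.eval x) heq
  rw [pflip_eval] at hx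
  rw [hx]
  linear_combination (-(Q n).eval (-x)) * neg_one_pow_sq n

lemma innerF_odd (n : ℕ) (f g : Polynomial ℝ)
    (hf : ∀ x : ℝ, f.eval (-x) = (-1 : ℝ) ^ n * f.eval x)
    (hg : ∀ x : ℝ, g.eval (-x) = (-1 : ℝ) ^ n * g.eval x) :
    innerF (X * f) g = 0 := by
  set F : ℝ → ℝ := fun x => (X * f).eval x * g.eval x * Real.exp (-x ^ 4) with hF
  have h : (∫ x : ℝ, F x) = - ∫ x : ℝ, F x := by
    calc (∫ x : ℝ, F x) = ∫ x : ℝ, F (-x) := (integral_neg_eq_self F volume).symm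
      _ = ∫ x : ℝ, -(F x) := by
          congr 1; funext x
          simp only [hF, Polynomial.eval_mul, Polynomial.eval_X]
          rw [hf x, hg x, show (-x : ℝ) ^ 4 = x ^ 4 from by ring]
          linear_combination (-(x * f.eval x * g.eval x * Real.exp (-x ^ 4))) * neg_one_pow_sq n
      _ = - ∫ x : ℝ, F x := integral_neg _
  have h2 : innerF (X * f) g = ∫ x : ℝ, F x := rfl
  rw [h2]
  linarith [h]


lemma innerS_eq_innerS' : innerS = innerS' := rfl

lemma natDegree_le_of_degree_lt {p : Polynomial ℝ} {n : ℕ} (h : p.degree < ((n+1 : ℕ) : WithBot ℕ)) :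
    p.natDegree ≤ n := by
  by_cases hp : p = 0
  · simp [hp]
  · have := (Polynomial.natDegree_lt_iff_degree_lt hp).mpr h
    omega

/-- Case `λ₂ = 0`: `x Q_n = P_{n+1} + b_n P_{n-1}` for `n ≥ 1`, where
`b n = k̂ n / k (n-1)`. -/
theorem sobolev_freud_connection_xQ
    (l1 : ℝ) (hl1 : 0 ≤ l1)
    (P Q : ℕ → Polynomial ℝ) (k khat : ℕ → ℝ)
    (hPmonic : ∀ n, (P n).Monic) (hPdeg : ∀ n, (P n).natDegree = n)
    (hPorth : ∀ n m : ℕ, m < n → innerF (P n) (X ^ m) = 0)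
    (hQmonic : ∀ n, (Q n).Monic) (hQdeg : ∀ n, (Q n).natDegree = n)
    (hQorth : ∀ n m : ℕ, m < n → innerS l1 0 (Q n) (X ^ m) = 0)
    (hk : ∀ n, k n = innerF (P n) (P n))
    (hkhat : ∀ n, khat n = innerS l1 0 (Q n) (Q n))
    (b : ℕ → ℝ) (hb : ∀ n, b n = khat n / k (n - 1)) :
    ∀ n, 1 ≤ n → X * Q n = P (n + 1) + C (b n) * P (n - 1) := by
  intro n hn
  have hQorth' : ∀ n m : ℕ, m < n → innerS' l1 0 (Q n) (X ^ m) = 0 := by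
    intro a m h
    rw [← innerS_eq_innerS']
    exact hQorth a m h
  have hPpar := P_parity P hPmonic hPdeg hPorth
  have hQpar := Q_parity l1 hl1 Q hQmonic hQdeg hQorth'
  -- extended orthogonality
  have hPorthF : ∀ (m : ℕ) (g : Polynomial ℝ), g.degree < (m : ℕ) → innerF (P m) g = 0 :=
    fun m g hg => orth_ext (innerF (P m)) (innerF_add_right (P m))
      (fun a g => innerF_C_mul_right a (P m) g) m (hPorth m) g hg
  have hQorthS : ∀ g : Polynomial ℝ, g.degree < (n : ℕ) → innerS' l1 0 (Q n) g = 0 :=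
    fun g hg => orth_ext (innerS' l1 0 (Q n)) (innerS'_add_right l1 (Q n))
      (fun a g => innerS'_C_mul_right l1 a (Q n) g) n (hQorth' n) g hg
  -- degrees
  have degP : ∀ j, (P j).degree = ((j : ℕ) : WithBot ℕ) := fun j => by
    rw [Polynomial.degree_eq_natDegree (hPmonic j).ne_zero, hPdeg j]
  have degQ : (Q n).degree = ((n : ℕ) : WithBot ℕ) := by
    rw [Polynomial.degree_eq_natDegree (hQmonic n).ne_zero, hQdeg n]
  have hXP : ∀ j, (X * P j).Monic := fun j => Polynomial.monic_X.mul (hPmonic j)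
  have hXPdeg : ∀ j, (X * P j).natDegree = j + 1 := fun j => by
    rw [Polynomial.monic_X.natDegree_mul (hPmonic j), Polynomial.natDegree_X, hPdeg j]
    omega
  have degXP : ∀ j, (X * P j).degree = ((j + 1 : ℕ) : WithBot ℕ) := fun j => by
    rw [Polynomial.degree_eq_natDegree (hXP j).ne_zero, hXPdeg j]
  have hXQ : (X * Q n).Monic := Polynomial.monic_X.mul (hQmonic n)
  have hXQdeg : (X * Q n).natDegree = n + 1 := by
    rw [Polynomial.monic_X.natDegree_mul (hQmonic n), Polynomial.natDegree_X, hQdeg n]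
    omega
  set D : Polynomial ℝ := X * Q n - (P (n + 1) + C (b n) * P (n - 1)) with hDdef
  -- degree bound on D
  have hDdeg : D.natDegree ≤ n := by
    have h1 : (X * Q n - P (n + 1)).degree < ((n + 1 : ℕ) : WithBot ℕ) := by
      have hde : (X * Q n).degree = (P (n + 1)).degree := by
        rw [Polynomial.degree_eq_natDegree hXQ.ne_zero, hXQdeg, degP (n + 1)]
      have hlc : (X * Q n).leadingCoeff = (P (n + 1)).leadingCoeff := by
        rw [hXQ.leadingCoeff, (hPmonic (n + 1)).leadingCoeff]
      have := Polynomial.degree_sub_lt hde hXQ.ne_zero hlc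
      rwa [Polynomial.degree_eq_natDegree hXQ.ne_zero, hXQdeg] at this
    have h2 : (X * Q n - P (n + 1)).natDegree ≤ n := natDegree_le_of_degree_lt h1
    have h3 : (C (b n) * P (n - 1)).natDegree ≤ n := by
      refine le_trans (Polynomial.natDegree_C_mul_le _ _) ?_
      rw [hPdeg]; omega
    have h4 : D = (X * Q n - P (n + 1)) - C (b n) * P (n - 1) := by rw [hDdef]; ring
    rw [h4]
    exact le_trans (Polynomial.natDegree_sub_le _ _) (by omega)
  -- the key: innerF (P d) (X * Q n) via Sobolev
  have hshift : ∀ j, innerF (P j) (X * Q n) = innerS' l1 0 (Q n) (X * P j) := by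
    intro j
    rw [innerF_X_shift, innerF_comm, innerS'_def]
    simp [Polynomial.eval_mul]
  -- orthogonality of D to all P d, d ≤ n
  have horth : ∀ d, d ≤ n → innerF (P d) D = 0 := by
    intro d hd
    have hexp : innerF (P d) D = innerF (P d) (X * Q n)
        - (innerF (P d) (P (n + 1)) + b n * innerF (P d) (P (n - 1))) := by
      rw [hDdef, innerF_sub_right, innerF_add_right, innerF_C_mul_right]
    have hterm2 : innerF (P d) (P (n + 1)) = 0 := by
      rw [innerF_comm]
      exact hPorthF (n + 1) (P d) (by rw [degP d]; exact_mod_cast (by omega : d < n + 1))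
    rcases (by omega : d = n ∨ d = n - 1 ∨ d + 1 < n) with hcase | hcase | hcase
    · -- d = n : parity
      rw [hcase] at hexp hterm2 ⊢
      have hterm1 : innerF (P n) (X * Q n) = 0 := by
        rw [innerF_comm]
        exact innerF_odd n (Q n) (P n) (hQpar n) (hPpar n)
      have hterm3 : innerF (P n) (P (n - 1)) = 0 :=
        hPorthF n (P (n - 1)) (by rw [degP (n - 1)]; exact_mod_cast (by omega : n - 1 < n))
      rw [hexp, hterm1, hterm2, hterm3]; ring
    · -- d = n - 1 : the b_n term
      rw [hcase] at hexp hterm2 ⊢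
      have hterm1 : innerF (P (n - 1)) (X * Q n) = khat n := by
        rw [hshift]
        have hsplit : X * P (n - 1) = P n + (X * P (n - 1) - P n) := by ring
        rw [hsplit, innerS'_add_right]
        have hz1 : innerS' l1 0 (Q n) (X * P (n - 1) - P n) = 0 := by
          apply hQorthS
          have hde : (X * P (n - 1)).degree = (P n).degree := by
            rw [degXP (n - 1), degP n]; congr 1; omega
          have hlc : (X * P (n - 1)).leadingCoeff = (P n).leadingCoeff := by
            rw [(hXP (n - 1)).leadingCoeff, (hPmonic n).leadingCoeff]
          have := Polynomial.degree_sub_lt hde (hXP (n - 1)).ne_zero hlc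
          rw [degXP (n - 1)] at this
          have hnn : n - 1 + 1 = n := by omega
          rwa [hnn] at this
        have hz2 : innerS' l1 0 (Q n) (P n) = khat n := by
          have hsplit2 : P n = Q n + (P n - Q n) := by ring
          rw [hsplit2, innerS'_add_right]
          have hz3 : innerS' l1 0 (Q n) (P n - Q n) = 0 := by
            apply hQorthS
            have hde : (P n).degree = (Q n).degree := by rw [degP n, degQ]
            have hlc : (P n).leadingCoeff = (Q n).leadingCoeff := by
              rw [(hPmonic n).leadingCoeff, (hQmonic n).leadingCoeff]
            have := Polynomial.degree_sub_lt hde (hPmonic n).ne_zero hlc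
            rwa [degP n] at this
          rw [hz3, hkhat n, innerS_eq_innerS', add_zero]
        rw [hz1, hz2, add_zero]
      have hterm3 : innerF (P (n - 1)) (P (n - 1)) = k (n - 1) := (hk (n - 1)).symm
      have hkpos : k (n - 1) ≠ 0 := by
        rw [hk]; exact (innerF_self_pos _ (hPmonic (n - 1)).ne_zero).ne'
      rw [hexp, hterm1, hterm2, hterm3, hb n, zero_add]
      field_simp
      ring
    · -- d + 1 < n
      have hterm1 : innerF (P d) (X * Q n) = 0 := by
        rw [hshift]
        apply hQorthS
        rw [degXP d]
        exact_mod_cast (by omega : d + 1 < n)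
      have hterm3 : innerF (P d) (P (n - 1)) = 0 := by
        rw [innerF_comm]
        exact hPorthF (n - 1) (P d) (by rw [degP d]; exact_mod_cast (by omega : d < n - 1))
      rw [hexp, hterm1, hterm2, hterm3]; ring
  -- conclude D = 0
  have hD0 : D = 0 := by
    by_contra hne
    set d := D.natDegree with hdd
    have hc : D.leadingCoeff ≠ 0 := Polynomial.leadingCoeff_ne_zero.mpr hne
    have hCP : (C D.leadingCoeff * P d).degree = D.degree := by
      rw [Polynomial.degree_eq_natDegree (mul_ne_zero (by simpa using hc) (hPmonic d).ne_zero),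
        Polynomial.natDegree_C_mul hc, hPdeg d, Polynomial.degree_eq_natDegree hne]
    have hlc : D.leadingCoeff = (C D.leadingCoeff * P d).leadingCoeff := by
      rw [Polynomial.leadingCoeff_mul, Polynomial.leadingCoeff_C, (hPmonic d).leadingCoeff,
        mul_one]
    have hE : innerF (P d) (D - C D.leadingCoeff * P d) = 0 := by
      refine orth_ext (innerF (P d)) (innerF_add_right (P d))
        (fun a g => innerF_C_mul_right a (P d) g) d (hPorth d) _ ?_
      have := Polynomial.degree_sub_lt hCP.symm hne hlc
      rwa [Polynomial.degree_eq_natDegree hne] at this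
    have hsplit : innerF (P d) D
        = D.leadingCoeff * innerF (P d) (P d) + innerF (P d) (D - C D.leadingCoeff * P d) := by
      rw [← innerF_C_mul_right, ← innerF_add_right]
      congr 1
      ring
    have h0 := horth d (hDdeg)
    rw [hsplit, hE, add_zero] at h0
    rcases mul_eq_zero.mp h0 with h | h
    · exact hc h
    · exact (innerF_self_pos _ (hPmonic d).ne_zero).ne' h
  exact sub_eq_zero.mp hD0
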